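/- The function f(t) = sin(ln(1+t)) on [0,∞) is quasi-asymptotically almost periodic but not asymptotically almost periodic. -/

import Mathlib

open Set Filter MeasureTheory

def IsQAAP {X : Type*} [NormedAddCommGroup X] (I : Set ℝ) (f : ℝ → X) : Prop :=
  ContinuousOn f I ∧ (∃ C, ∀ t ∈ I, ‖f t‖ ≤ C) ∧
  ∀ ε > (0:ℝ), ∃ L > (0:ℝ), ∀ a : ℝ, Set.Icc a (a + L) ⊆ I →
    ∃ τ ∈ Set.Icc a (a + L), ∃ M > (0:ℝ),
      ∀ t ∈ I, M ≤ |t| → ‖f (t + τ) - f t‖ ≤ ε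

def IsAAP {X : Type*} [NormedAddCommGroup X] (I : Set ℝ) (f : ℝ → X) : Prop :=
  ContinuousOn f I ∧ (∃ C, ∀ t ∈ I, ‖f t‖ ≤ C) ∧
  ∀ ε > (0:ℝ), ∃ l > (0:ℝ), ∃ M > (0:ℝ), ∀ a : ℝ, Set.Icc a (a + l) ⊆ I →
    ∃ τ ∈ Set.Icc a (a + l),
      ∀ t ∈ I, M ≤ |t| → M ≤ |t + τ| → ‖f (t + τ) - f t‖ ≤ ε

lemma sin_lip (x y : ℝ) : |Real.sin x - Real.sin y| ≤ |x - y| := by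
  rw [Real.sin_sub_sin, abs_mul, abs_mul]
  have h1 : |Real.sin ((x - y) / 2)| ≤ |(x - y) / 2| := Real.abs_sin_le_abs
  have h2 : |Real.cos ((x + y) / 2)| ≤ 1 := Real.abs_cos_le_one _
  have h3 : |(x - y) / 2| = |x - y| / 2 := by rw [abs_div]; norm_num
  have h4 : (0:ℝ) ≤ |Real.sin ((x - y) / 2)| := abs_nonneg _
  calc |(2:ℝ)| * |Real.sin ((x - y) / 2)| * |Real.cos ((x + y) / 2)|
      ≤ |(2:ℝ)| * |Real.sin ((x - y) / 2)| * 1 := by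
        apply mul_le_mul_of_nonneg_left h2 (by positivity)
    _ ≤ 2 * (|x - y| / 2) := by rw [abs_two, mul_one]; nlinarith [h3 ▸ h1]
    _ = |x - y| := by ring

lemma log_diff_le {u d : ℝ} (hu : 0 < u) (hd : 0 ≤ d) :
    Real.log (u + d) - Real.log u ≤ d / u := by
  have h1 : Real.log (u + d) - Real.log u = Real.log ((u + d) / u) := by
    rw [Real.log_div (by linarith) (ne_of_gt hu)]
  have h2 : (0:ℝ) < (u + d) / u := div_pos (by linarith) hu
  have h3 := Real.log_le_sub_one_of_pos h2
  have h4 : (u + d) / u - 1 = d / u := by field_simp; ring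
  linarith [h1 ▸ h3, h4 ▸ h3]

lemma log_diff_nonneg {u d : ℝ} (hu : 0 < u) (hd : 0 ≤ d) :
    0 ≤ Real.log (u + d) - Real.log u := by
  have := Real.log_le_log (by linarith : (0:ℝ) < u) (by linarith : u ≤ u + d)
  linarith

/-- t ↦ sin(ln(1+t)) on [0,∞) is quasi-asymptotically almost periodic but not
asymptotically almost periodic. -/
theorem sin_log_qaap_not_aap :
    IsQAAP (Set.Ici 0) (fun t : ℝ => Real.sin (Real.log (1 + t))) ∧
    ¬ IsAAP (Set.Ici 0) (fun t : ℝ => Real.sin (Real.log (1 + t))) := by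
  constructor
  · refine ⟨?_, ⟨1, ?_⟩, ?_⟩
    · intro t ht
      have ht0 : (0:ℝ) ≤ t := ht
      have h1 : (0:ℝ) < 1 + t := by linarith
      exact (Real.continuous_sin.continuousAt.comp
        ((Real.continuousAt_log (ne_of_gt h1)).comp
          (continuousAt_const.add continuousAt_id))).continuousWithinAt
    · intro t _
      rw [Real.norm_eq_abs]
      exact Real.abs_sin_le_one _
    · intro ε hε
      refine ⟨1, one_pos, fun a ha => ?_⟩
      have ha0 : (0:ℝ) ≤ a := ha (left_mem_Icc.mpr (by linarith))
      refine ⟨a, ⟨le_refl a, by linarith⟩, a / ε + 1, by positivity, fun t ht hMt => ?_⟩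
      have ht0 : (0:ℝ) ≤ t := ht
      rw [abs_of_nonneg ht0] at hMt
      have h1t : (0:ℝ) < 1 + t := by linarith
      rw [Real.norm_eq_abs]
      have hlip : |Real.sin (Real.log (1 + (t + a))) - Real.sin (Real.log (1 + t))|
          ≤ |Real.log (1 + (t + a)) - Real.log (1 + t)| := sin_lip _ _
      have heq : (1:ℝ) + (t + a) = (1 + t) + a := by ring
      have hd : Real.log (1 + (t + a)) - Real.log (1 + t) ≤ a / (1 + t) := by
        rw [heq]; exact log_diff_le h1t ha0
      have hnn : 0 ≤ Real.log (1 + (t + a)) - Real.log (1 + t) := by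
        rw [heq]; exact log_diff_nonneg h1t ha0
      have hfin : a / (1 + t) ≤ ε := by
        rw [div_le_iff₀ h1t]
        have h1 : ε * (a / ε + 1) ≤ ε * t := mul_le_mul_of_nonneg_left hMt hε.le
        have h2 : ε * (a / ε + 1) = a + ε := by field_simp
        nlinarith
      rw [abs_of_nonneg hnn] at hlip
      linarith
  · rintro ⟨-, -, h⟩
    obtain ⟨l, hl, M, hM, h⟩ := h (1/4) (by norm_num)
    set c := Real.sin (Real.log (1 + M)) with hc
    have hpi := Real.pi_pos
    set K := max (Real.log (1 + M)) (Real.log (2 * l)) with hK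
    obtain ⟨n, hn⟩ := exists_nat_ge ((K + Real.pi) / (2 * Real.pi))
    have hn2 : K + Real.pi ≤ n * (2 * Real.pi) := by
      rw [div_le_iff₀ (by positivity)] at hn
      linarith
    obtain ⟨x0, hx0K, hsinx0⟩ : ∃ x0, K ≤ x0 ∧ 1 ≤ |Real.sin x0 - c| := by
      rcases le_or_gt c 0 with hc0 | hc0
      · refine ⟨Real.pi / 2 + n * (2 * Real.pi), by linarith, ?_⟩
        rw [Real.sin_add_nat_mul_two_pi, Real.sin_pi_div_two,
          abs_of_nonneg (by linarith)]
        linarith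
      · refine ⟨-(Real.pi / 2) + n * (2 * Real.pi), by linarith, ?_⟩
        rw [Real.sin_add_nat_mul_two_pi, Real.sin_neg, Real.sin_pi_div_two,
          abs_of_nonpos (by linarith)]
        linarith
    have hex : (1:ℝ) + M ≤ Real.exp x0 := by
      calc (1:ℝ) + M = Real.exp (Real.log (1 + M)) := (Real.exp_log (by linarith)).symm
        _ ≤ Real.exp x0 := Real.exp_le_exp.mpr (le_trans (le_max_left _ _) hx0K)
    have h2l : 2 * l ≤ Real.exp x0 := by
      calc 2 * l = Real.exp (Real.log (2 * l)) := (Real.exp_log (by linarith)).symm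
        _ ≤ Real.exp x0 := Real.exp_le_exp.mpr (le_trans (le_max_right _ _) hx0K)
    set a := Real.exp x0 - (1 + M) with ha
    have ha0 : 0 ≤ a := by simp [ha]; linarith
    obtain ⟨τ, hτ, hτ2⟩ := h a (fun t ht => by
      have := ht.1
      exact mem_Ici.mpr (by linarith))
    have hτa : a ≤ τ := hτ.1
    have hτal : τ ≤ a + l := hτ.2
    have key := hτ2 M (mem_Ici.mpr hM.le) (by rw [abs_of_pos hM])
      (by rw [abs_of_pos (by linarith)]; linarith)
    rw [Real.norm_eq_abs] at key
    set x := Real.log (1 + (M + τ)) with hx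
    have hMτpos : (0:ℝ) < 1 + (M + τ) := by linarith
    have hx0x : x0 ≤ x := by
      have : Real.exp x0 ≤ Real.exp x := by
        rw [hx, Real.exp_log hMτpos]; linarith
      exact Real.exp_le_exp.mp this
    have hxup : x ≤ x0 + 1 / 2 := by
      have hdnn : 0 ≤ (1 + (M + τ)) - Real.exp x0 := by linarith
      have heq2 : (1:ℝ) + (M + τ) = Real.exp x0 + ((1 + (M + τ)) - Real.exp x0) := by ring
      have := log_diff_le (Real.exp_pos x0) hdnn
      rw [← heq2, Real.log_exp] at this
      have hdle : (1 + (M + τ)) - Real.exp x0 ≤ l := by linarith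
      have hfrac : ((1 + (M + τ)) - Real.exp x0) / Real.exp x0 ≤ 1 / 2 := by
        rw [div_le_iff₀ (Real.exp_pos x0)]
        nlinarith [Real.exp_pos x0]
      linarith
    have hsx : |Real.sin x - Real.sin x0| ≤ 1 / 2 := by
      have := sin_lip x x0
      have habs : |x - x0| ≤ 1 / 2 := by
        rw [abs_of_nonneg (by linarith)]; linarith
      linarith
    have htri := abs_sub_le (Real.sin x0) (Real.sin x) c
    have h1 : |Real.sin x0 - Real.sin x| = |Real.sin x - Real.sin x0| := abs_sub_comm _ _
    linarith
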